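/- Lemma 5.1(b): Let x* ∈ X be an optimal solution of min_{x∈X} Ψ(x), let x^0 ∈ X, set y_i^0 = ∇f_i(x^0) and y_i* = ∇f_i(x*) for i = 1, …, m, and define D(y^0, y*) := Σ_{i=1}^m [J_i(y_i*) − J_i(y_i^0) − ⟨x^0, y_i* − y_i^0⟩]. Then D(y^0, y*) ≤ Ψ(x^0) − Ψ(x*). -/

import Mathlib

open scoped RealInnerProductSpace

section Aux
variable {F : Type*} [NormedAddCommGroup F] [InnerProductSpace ℝ F] [CompleteSpace F]

lemma hasDerivAt_line {f : F → ℝ} {g x : F} (v : F) (hg : HasGradientAt f g x) :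
    HasDerivAt (fun t : ℝ => f (x + t • v)) ⟪g, v⟫ 0 := by
  have h1 : HasDerivAt (fun t : ℝ => x + t • v) v 0 := by
    simpa using ((hasDerivAt_id (0 : ℝ)).smul_const v).const_add x
  have hfd := hasGradientAt_iff_hasFDerivAt.mp hg
  have h0 : x = x + (0:ℝ) • v := by simp
  rw [h0] at hfd
  have h2 := hfd.comp_hasDerivAt 0 h1
  simp at h2
  exact h2

lemma grad_ineq {f : F → ℝ} {g x : F} (hc : ConvexOn ℝ Set.univ f)
    (hg : HasGradientAt f g x) (y : F) : ⟪g, y - x⟫ ≤ f y - f x := by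
  have hd := hasDerivAt_line (y - x) hg
  have hslope := hasDerivAt_iff_tendsto_slope.mp hd
  have hmono : Filter.Tendsto (slope (fun t : ℝ => f (x + t • (y - x))) 0)
      (nhdsWithin 0 (Set.Ioi 0)) (nhds ⟪g, y - x⟫) :=
    hslope.mono_left (nhdsWithin_mono _ fun t ht => ne_of_gt ht)
  refine le_of_tendsto hmono ?_
  filter_upwards [Ioo_mem_nhdsGT_of_mem (by norm_num : (0:ℝ) ∈ Set.Ico 0 1)] with t ht
  have ht0 : 0 < t := ht.1
  have ht1 : t < 1 := ht.2
  have key : f (x + t • (y - x)) ≤ (1 - t) * f x + t * f y := by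
    have := hc.2 (Set.mem_univ x) (Set.mem_univ y) (show (0:ℝ) ≤ 1 - t by linarith) ht0.le
      (by ring)
    have hx : (1 - t) • x + t • y = x + t • (y - x) := by
      rw [smul_sub, sub_smul, one_smul]; abel
    rwa [hx] at this
  rw [slope_def_field]
  simp only [sub_zero, zero_smul, add_zero]
  rw [div_le_iff₀ ht0]
  nlinarith

lemma conj_eq {f : F → ℝ} {g v : F} (hc : ConvexOn ℝ Set.univ f)
    (hg : HasGradientAt f g v) : (⨆ u, (⟪u, g⟫ - f u)) = ⟪v, g⟫ - f v := by
  have hub : ∀ u : F, ⟪u, g⟫ - f u ≤ ⟪v, g⟫ - f v := by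
    intro u
    have := grad_ineq hc hg u
    rw [inner_sub_right] at this
    have h1 : ⟪u, g⟫ = ⟪g, u⟫ := real_inner_comm g u
    have h2 : ⟪v, g⟫ = ⟪g, v⟫ := real_inner_comm g v
    linarith
  refine le_antisymm (ciSup_le hub) ?_
  have hb : BddAbove (Set.range fun u => ⟪u, g⟫ - f u) := by
    refine ⟨⟪v, g⟫ - f v, ?_⟩
    rintro _ ⟨u, rfl⟩
    exact hub u
  simpa using le_ciSup hb v
end Aux

/-- Lemma 5.1(b): with `y_i^0 = ∇f_i(x^0)`, `y_i* = ∇f_i(x*)` for an optimal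
solution `x*` of `min_{x∈X} Ψ(x)`, the Bregman distance
`D(y^0, y*) = Σ_i [J_i(y_i*) - J_i(y_i^0) - ⟨x^0, y_i* - y_i^0⟩]` satisfies
`D(y^0, y*) ≤ Ψ(x^0) - Ψ(x*)`. -/
theorem dual_bregman_bound_b
    {n m : ℕ} (X : Set (EuclideanSpace ℝ (Fin n)))
    (hXne : X.Nonempty) (hXclosed : IsClosed X) (hXconvex : Convex ℝ X)
    (f : Fin m → EuclideanSpace ℝ (Fin n) → ℝ)
    (f' : Fin m → EuclideanSpace ℝ (Fin n) → EuclideanSpace ℝ (Fin n))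
    (L : Fin m → ℝ) (μ : ℝ) (hμ : 0 ≤ μ)
    (hfconv : ∀ i, ConvexOn ℝ Set.univ (f i))
    (hfdiff : ∀ i u, HasGradientAt (f i) (f' i u) u)
    (hfiLip : ∀ i u v, ‖f' i u - f' i v‖ ≤ L i * ‖u - v‖)
    (h w : EuclideanSpace ℝ (Fin n) → ℝ)
    (hhconv : ConvexOn ℝ X h) (hwconv : ConvexOn ℝ X w)
    (J : Fin m → EuclideanSpace ℝ (Fin n) → ℝ)
    (hJ : ∀ i y, J i y = ⨆ u, (⟪u, y⟫ - f i u))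
    (x0 : EuclideanSpace ℝ (Fin n)) (hx0 : x0 ∈ X)
    (xstar : EuclideanSpace ℝ (Fin n)) (hxstarX : xstar ∈ X)
    (hopt : ∀ u ∈ X, (∑ i, f i xstar) + h xstar + μ * w xstar ≤
        (∑ i, f i u) + h u + μ * w u)
    (D : ℝ)
    (hD : D = ∑ i, (J i (f' i xstar) - J i (f' i x0) - ⟪x0, f' i xstar - f' i x0⟫)) :
    D ≤ ((∑ i, f i x0) + h x0 + μ * w x0)
        - ((∑ i, f i xstar) + h xstar + μ * w xstar) := by
  set v : EuclideanSpace ℝ (Fin n) := x0 - xstar with hv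
  -- rewrite D
  have hDeq : D = (∑ i, f i x0) - (∑ i, f i xstar) - ∑ i, ⟪f' i xstar, v⟫ := by
    rw [hD]
    have hterm : ∀ i, J i (f' i xstar) - J i (f' i x0) - ⟪x0, f' i xstar - f' i x0⟫
        = f i x0 - f i xstar - ⟪f' i xstar, v⟫ := by
      intro i
      rw [hJ, hJ, conj_eq (hfconv i) (hfdiff i xstar), conj_eq (hfconv i) (hfdiff i x0), hv]
      rw [inner_sub_right, inner_sub_right, real_inner_comm (f' i xstar) x0,
        real_inner_comm (f' i xstar) xstar]
      ring
    rw [Finset.sum_congr rfl fun i _ => hterm i, Finset.sum_sub_distrib, Finset.sum_sub_distrib]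
  -- derivative of F along the segment
  have hDeriv : HasDerivAt (fun t : ℝ => ∑ i, f i (xstar + t • v)) (∑ i, ⟪f' i xstar, v⟫) 0 :=
    HasDerivAt.fun_sum fun i _ => hasDerivAt_line v (hfdiff i xstar)
  -- optimality lower bound on the directional derivative
  have key : -(h x0 + μ * w x0 - (h xstar + μ * w xstar)) ≤ ∑ i, ⟪f' i xstar, v⟫ := by
    have hslope := hasDerivAt_iff_tendsto_slope.mp hDeriv
    have hmono : Filter.Tendsto (slope (fun t : ℝ => ∑ i, f i (xstar + t • v)) 0)
        (nhdsWithin 0 (Set.Ioi 0)) (nhds (∑ i, ⟪f' i xstar, v⟫)) :=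
      hslope.mono_left (nhdsWithin_mono _ fun t ht => ne_of_gt ht)
    refine ge_of_tendsto hmono ?_
    filter_upwards [Ioo_mem_nhdsGT_of_mem (by norm_num : (0:ℝ) ∈ Set.Ico 0 1)] with t ht
    have ht0 : 0 < t := ht.1
    have ht1 : t < 1 := ht.2
    have hxt : (1 - t) • xstar + t • x0 = xstar + t • v := by
      rw [hv, smul_sub, sub_smul, one_smul]; abel
    have hxtX : xstar + t • v ∈ X := by
      rw [← hxt]
      exact hXconvex hxstarX hx0 (by linarith) ht0.le (by ring)
    have hoptt := hopt _ hxtX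
    have hh : h (xstar + t • v) ≤ (1 - t) * h xstar + t * h x0 := by
      have := hhconv.2 hxstarX hx0 (show (0:ℝ) ≤ 1 - t by linarith) ht0.le (by ring)
      rwa [hxt] at this
    have hw : w (xstar + t • v) ≤ (1 - t) * w xstar + t * w x0 := by
      have := hwconv.2 hxstarX hx0 (show (0:ℝ) ≤ 1 - t by linarith) ht0.le (by ring)
      rwa [hxt] at this
    rw [slope_def_field]
    simp only [sub_zero, zero_smul, add_zero]
    rw [le_div_iff₀ ht0]
    nlinarith [mul_le_mul_of_nonneg_left hw hμ]
  linarith [hDeq]
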